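/- arXiv:math/9201300 — 7 statements merged into one kernel-verified Lean document; each statement's English description precedes it below -/
import Mathlib

section
/- Let $X$ be a measurable space, $\lambda$ a probability measure on $X$, $f : X \to X$ measurable with $f_*\lambda \ll \lambda$, and $\mu$ a measure with $\mu \ll \lambda$. Let $I_1, I_2$ be measurable sets such that $\lambda(f^{-n_0}(I_1) \cap I_2) > 0$ for some $n_0 \ge 0$, and suppose that for some $K > 0$ and all $n \ge 0$, the measure $f^n_*\mu$ restricted to $I_2$ has distortion bounded by $K$ relative to $\lambda$ (with $0 < \mu(f^{-n}(I_2)) < \infty$ and $0 < \lambda(I_2) < \infty$). Then there exists $\epsilon > 0$ such that $\mu(f^{-n-n_0}(I_1)) \ge \epsilon\, \mu(f^{-n}(I_2))$ for all $n \ge 0$. -/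
open scoped ENNReal
open MeasureTheory Set Function

theorem stmt_1 {X : Type*} [MeasurableSpace X]
    (lam : Measure X) [IsProbabilityMeasure lam]
    (f : X → X) (hf : Measurable f)
    (hquasi : lam.map f ≪ lam)
    (mu : Measure X) (hmu : mu ≪ lam)
    (I₁ I₂ : Set X) (hI₁ : MeasurableSet I₁) (hI₂ : MeasurableSet I₂)
    (n₀ : ℕ) (hn₀ : 0 < lam (f^[n₀] ⁻¹' I₁ ∩ I₂))
    (hlI₂ : 0 < lam I₂) (hlI₂' : lam I₂ < ⊤)
    (K : ℝ≥0∞) (hK : 0 < K) (hK' : K < ⊤)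
    (hfin : ∀ n : ℕ, 0 < mu (f^[n] ⁻¹' I₂) ∧ mu (f^[n] ⁻¹' I₂) < ⊤)
    (hdist : ∀ n : ℕ, ∀ A : Set X, MeasurableSet A → A ⊆ I₂ →
      (1 / K) * (lam A / lam I₂) ≤ mu (f^[n] ⁻¹' A) / mu (f^[n] ⁻¹' I₂) ∧
      mu (f^[n] ⁻¹' A) / mu (f^[n] ⁻¹' I₂) ≤ K * (lam A / lam I₂)) :
    ∃ ε : ℝ≥0∞, 0 < ε ∧
      ∀ n : ℕ, ε * mu (f^[n] ⁻¹' I₂) ≤ mu (f^[(n + n₀)] ⁻¹' I₁) := by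
  set A := f^[n₀] ⁻¹' I₁ ∩ I₂ with hA
  have hAmeas : MeasurableSet A := ((hf.iterate n₀) hI₁).inter hI₂
  have hAsub : A ⊆ I₂ := inter_subset_right
  refine ⟨(1 / K) * (lam A / lam I₂), ?_, ?_⟩
  · have h1 : (0:ℝ≥0∞) < 1 / K := ENNReal.div_pos one_ne_zero hK'.ne
    have h2 : (0:ℝ≥0∞) < lam A / lam I₂ := ENNReal.div_pos hn₀.ne' hlI₂'.ne
    exact ENNReal.mul_pos h1.ne' h2.ne'
  · intro n
    have hd := (hdist n A hAmeas hAsub).1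
    have hb := hfin n
    have key : (1 / K) * (lam A / lam I₂) * mu (f^[n] ⁻¹' I₂) ≤ mu (f^[n] ⁻¹' A) := by
      rw [← ENNReal.le_div_iff_mul_le (Or.inl hb.1.ne') (Or.inl hb.2.ne)]
      exact hd
    refine key.trans (measure_mono ?_)
    intro x hx
    rw [mem_preimage, add_comm, iterate_add_apply]
    exact hx.1
end

section
/- Let $f : X \to X$ be measurable and $\mu$ a measure on $X$. Suppose $I_1, I_2$ are measurable sets with $\mu(I_2) > 0$, $\sup_{n \ge 0} \mu(f^{-n}(I_2)) = M < \infty$, and there exist $\epsilon > 0$ and $n_0 \ge 0$ with $\mu(f^{-n-n_0}(I_1)) \ge \epsilon\, \mu(f^{-n}(I_2))$ for all $n \ge 0$. Then for all $n > n_0$, setting $S_n\mu(A) = \sum_{i=0}^{n-1} \mu(f^{-i}(A))$, one has $\frac{S_n\mu(I_1)}{S_n\mu(I_2)} \ge \epsilon \frac{\mu(I_2)}{n_0 M + \mu(I_2)} > 0$. -/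
open scoped ENNReal
open MeasureTheory Set Function Finset

theorem stmt_2 {X : Type*} [MeasurableSpace X]
    (f : X → X) (hf : Measurable f)
    (mu : Measure X)
    (I₁ I₂ : Set X) (hI₁ : MeasurableSet I₁) (hI₂ : MeasurableSet I₂)
    (hmI₂ : 0 < mu I₂)
    (M : ℝ≥0∞) (hM : M = ⨆ n : ℕ, mu (f^[n] ⁻¹' I₂)) (hM' : M < ⊤)
    (ε : ℝ≥0∞) (hε : 0 < ε) (n₀ : ℕ)
    (hcomp : ∀ n : ℕ, ε * mu (f^[n] ⁻¹' I₂) ≤ mu (f^[(n + n₀)] ⁻¹' I₁)) :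
    ∀ n : ℕ, n₀ < n →
      ε * (mu I₂ / (n₀ * M + mu I₂)) ≤
        (∑ i ∈ Finset.range n, mu (f^[i] ⁻¹' I₁)) /
          (∑ i ∈ Finset.range n, mu (f^[i] ⁻¹' I₂)) ∧
      0 < ε * (mu I₂ / (n₀ * M + mu I₂)) := by
  intro n hn
  set A := ∑ i ∈ Finset.range n, mu (f^[i] ⁻¹' I₁) with hA
  set B := ∑ i ∈ Finset.range n, mu (f^[i] ⁻¹' I₂) with hB
  set D := (n₀ : ℝ≥0∞) * M + mu I₂ with hD
  have hbM : ∀ i : ℕ, mu (f^[i] ⁻¹' I₂) ≤ M := by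
    intro i; rw [hM]; exact le_iSup (fun n => mu (f^[n] ⁻¹' I₂)) i
  have hI₂M : mu I₂ ≤ M := by simpa using hbM 0
  have hDne : D ≠ ∞ := by
    refine ENNReal.add_ne_top.2 ⟨ENNReal.mul_ne_top (by simp) hM'.ne, (hI₂M.trans_lt hM').ne⟩
  have hD0 : D ≠ 0 := fun h => by
    simp only [hD, add_eq_zero] at h; exact hmI₂.ne' h.2
  -- n = m + n₀
  set m := n - n₀ with hm
  have hmn : m + n₀ = n := Nat.sub_add_cancel hn.le
  have hm0 : 0 < m := Nat.sub_pos_of_lt hn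
  set B' := ∑ i ∈ Finset.range m, mu (f^[i] ⁻¹' I₂) with hB'
  have hI₂B' : mu I₂ ≤ B' := by
    have := Finset.single_le_sum (f := fun i => mu (f^[i] ⁻¹' I₂))
      (fun i _ => zero_le) (Finset.mem_range.2 hm0)
    simpa using this
  have hB'B : B' ≤ B := by
    rw [hB, hB', ← hmn, Finset.sum_range_add]
    exact le_self_add
  have hBB' : B ≤ B' + n₀ * M := by
    rw [hB, ← hmn, Finset.sum_range_add]
    refine add_le_add le_rfl ?_
    calc ∑ i ∈ Finset.range n₀, mu (f^[m + i] ⁻¹' I₂)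
        ≤ ∑ _i ∈ Finset.range n₀, M := Finset.sum_le_sum fun i _ => hbM _
      _ = n₀ * M := by simp [mul_comm]
  have hAB' : ε * B' ≤ A := by
    calc ε * B' = ∑ i ∈ Finset.range m, ε * mu (f^[i] ⁻¹' I₂) := by
          rw [Finset.mul_sum]
      _ ≤ ∑ i ∈ Finset.range m, mu (f^[i + n₀] ⁻¹' I₁) :=
          Finset.sum_le_sum fun i _ => hcomp i
      _ = ∑ i ∈ Finset.range m, mu (f^[n₀ + i] ⁻¹' I₁) := by
          simp [Nat.add_comm]
      _ = ∑ i ∈ Finset.Ico n₀ n, mu (f^[i] ⁻¹' I₁) := by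
          rw [Finset.sum_Ico_eq_sum_range]
      _ ≤ A := by
          rw [hA, ← Nat.Ico_zero_eq_range]
          exact Finset.sum_le_sum_of_subset (Finset.Ico_subset_Ico (Nat.zero_le _) le_rfl)
  have hBne : B ≠ ∞ := by
    have hle : B ≤ n * M := by
      calc B ≤ ∑ _i ∈ Finset.range n, M := Finset.sum_le_sum fun i _ => hbM i
        _ = n * M := by simp [mul_comm]
    exact (hle.trans_lt (ENNReal.mul_lt_top (by simp) hM')).ne
  have hB0 : B ≠ 0 := by
    intro h
    exact hmI₂.ne' (le_antisymm (h ▸ hI₂B'.trans hB'B) zero_le)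
  constructor
  · rw [ENNReal.le_div_iff_mul_le (Or.inl hB0) (Or.inl hBne)]
    have heq : ε * (mu I₂ / D) * B = ε * mu I₂ * B / D := by
      rw [div_eq_mul_inv, div_eq_mul_inv]; ring
    rw [heq, ENNReal.div_le_iff hD0 hDne]
    calc ε * mu I₂ * B ≤ ε * mu I₂ * (B' + n₀ * M) := mul_le_mul_right hBB' _
      _ = ε * (mu I₂ * B') + ε * (mu I₂ * (n₀ * M)) := by ring
      _ ≤ ε * (mu I₂ * B') + ε * (B' * (n₀ * M)) :=
          add_le_add le_rfl (mul_le_mul_right (mul_le_mul_left hI₂B' _) _)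
      _ = ε * B' * D := by rw [hD]; ring
      _ ≤ A * D := mul_le_mul_left hAB' _
  · exact ENNReal.mul_pos hε.ne' (ENNReal.div_pos hmI₂.ne' hDne).ne'
end

section
/- Let $f : X \to X$ be measurable, $\mu$ a measure, and $I_1, I_2$ measurable sets with $\mu(I_1), \mu(I_2) > 0$, $\sup_{n\ge 0}\mu(f^{-n}(I_1)) < \infty$, $\sup_{n\ge 0}\mu(f^{-n}(I_2)) < \infty$, and suppose there are $\epsilon_1, \epsilon_2 > 0$ and $n_1, n_2 \ge 0$ such that $\mu(f^{-n-n_1}(I_1)) \ge \epsilon_1 \mu(f^{-n}(I_2))$ and $\mu(f^{-n-n_2}(I_2)) \ge \epsilon_2 \mu(f^{-n}(I_1))$ for all $n \ge 0$. Then there exists $K < \infty$ such that $1/K \le S_n\mu(I_1)/S_n\mu(I_2) \le K$ for all $n \ge 1$, where $S_n\mu(A) = \sum_{i=0}^{n-1}\mu(f^{-i}(A))$. -/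
open scoped ENNReal
open MeasureTheory Set Function

lemma sum_dom_aux (a b : ℕ → ℝ≥0∞) (ha0 : 0 < a 0)
    (hM : (⨆ n, a n) < ⊤)
    (ε : ℝ≥0∞) (hε : 0 < ε) (hε' : ε ≠ ⊤) (m : ℕ)
    (hcomp : ∀ n, ε * b n ≤ a (n + m)) :
    ∃ K : ℝ≥0∞, K < ⊤ ∧ ∀ n, 1 ≤ n →
      ∑ i ∈ Finset.range n, b i ≤ K * ∑ i ∈ Finset.range n, a i := by
  set M := ⨆ n, a n with hMdef
  have haM : ∀ n, a n ≤ M := fun n => le_iSup a n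
  have ha0t : a 0 ≠ ⊤ := ((haM 0).trans_lt hM).ne
  set c : ℝ≥0∞ := (m : ℝ≥0∞) * M * (a 0)⁻¹ with hc
  have hcfin : c < ⊤ := by
    apply ENNReal.mul_lt_top
    · exact ENNReal.mul_lt_top (by simp) hM
    · exact ENNReal.inv_lt_top.mpr ha0
  refine ⟨ε⁻¹ * (1 + c), ?_, ?_⟩
  · exact ENNReal.mul_lt_top (ENNReal.inv_lt_top.mpr hε)
      (ENNReal.add_lt_top.mpr ⟨ENNReal.one_lt_top, hcfin⟩)
  intro n hn
  have hsub : ε * ∑ i ∈ Finset.range n, b i ≤ ∑ i ∈ Finset.range n, a i + (m : ℝ≥0∞) * M := by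
    rw [Finset.mul_sum]
    calc ∑ i ∈ Finset.range n, ε * b i ≤ ∑ i ∈ Finset.range n, a (i + m) :=
          Finset.sum_le_sum fun i _ => hcomp i
      _ ≤ (∑ i ∈ Finset.range m, a i) + ∑ i ∈ Finset.range n, a (m + i) := by
          refine le_add_of_nonneg_of_le (zero_le) (le_of_eq ?_)
          exact Finset.sum_congr rfl fun i _ => by rw [Nat.add_comm]
      _ = ∑ i ∈ Finset.range (m + n), a i := (Finset.sum_range_add a m n).symm
      _ = (∑ i ∈ Finset.range n, a i) + ∑ i ∈ Finset.range m, a (n + i) := by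
          rw [Nat.add_comm m n, Finset.sum_range_add]
      _ ≤ (∑ i ∈ Finset.range n, a i) + (m : ℝ≥0∞) * M := by
          gcongr
          calc ∑ i ∈ Finset.range m, a (n + i) ≤ ∑ _i ∈ Finset.range m, M :=
                Finset.sum_le_sum fun i _ => haM _
            _ = (m : ℝ≥0∞) * M := by simp [Finset.sum_const, mul_comm]
  have ha0le : a 0 ≤ ∑ i ∈ Finset.range n, a i :=
    Finset.single_le_sum (f := a) (fun i _ => zero_le) (Finset.mem_range.mpr hn)
  have hmM : (m : ℝ≥0∞) * M ≤ c * ∑ i ∈ Finset.range n, a i := by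
    calc (m : ℝ≥0∞) * M = c * a 0 := by
          rw [hc, mul_assoc, ENNReal.inv_mul_cancel ha0.ne' ha0t, mul_one]
      _ ≤ c * ∑ i ∈ Finset.range n, a i := by gcongr
  have : ε * ∑ i ∈ Finset.range n, b i ≤ (1 + c) * ∑ i ∈ Finset.range n, a i := by
    rw [add_mul, one_mul]
    exact hsub.trans (add_le_add le_rfl hmM)
  calc ∑ i ∈ Finset.range n, b i = ε⁻¹ * (ε * ∑ i ∈ Finset.range n, b i) := by
        rw [← mul_assoc, ENNReal.inv_mul_cancel hε.ne' hε', one_mul]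
    _ ≤ ε⁻¹ * ((1 + c) * ∑ i ∈ Finset.range n, a i) := by gcongr
    _ = ε⁻¹ * (1 + c) * ∑ i ∈ Finset.range n, a i := by rw [mul_assoc]

theorem stmt_3 {X : Type*} [MeasurableSpace X]
    (f : X → X) (hf : Measurable f)
    (mu : Measure X)
    (I₁ I₂ : Set X) (hI₁ : MeasurableSet I₁) (hI₂ : MeasurableSet I₂)
    (hfin : ∀ n : ℕ, 0 < mu (f^[n] ⁻¹' I₁) ∧ mu (f^[n] ⁻¹' I₁) < ⊤ ∧
      0 < mu (f^[n] ⁻¹' I₂) ∧ mu (f^[n] ⁻¹' I₂) < ⊤)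
    (hsup₁ : (⨆ n : ℕ, mu (f^[n] ⁻¹' I₁)) < ⊤)
    (hsup₂ : (⨆ n : ℕ, mu (f^[n] ⁻¹' I₂)) < ⊤)
    (ε₁ ε₂ : ℝ≥0∞) (hε₁ : 0 < ε₁) (hε₂ : 0 < ε₂) (n₁ n₂ : ℕ)
    (hcomp₁ : ∀ n : ℕ, ε₁ * mu (f^[n] ⁻¹' I₂) ≤ mu (f^[(n + n₁)] ⁻¹' I₁))
    (hcomp₂ : ∀ n : ℕ, ε₂ * mu (f^[n] ⁻¹' I₁) ≤ mu (f^[(n + n₂)] ⁻¹' I₂)) :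
    ∃ K : ℝ≥0∞, K < ⊤ ∧ ∀ n : ℕ, 1 ≤ n →
      1 / K ≤ (∑ i ∈ Finset.range n, mu (f^[i] ⁻¹' I₁)) /
              (∑ i ∈ Finset.range n, mu (f^[i] ⁻¹' I₂)) ∧
      (∑ i ∈ Finset.range n, mu (f^[i] ⁻¹' I₁)) /
        (∑ i ∈ Finset.range n, mu (f^[i] ⁻¹' I₂)) ≤ K := by
  set a : ℕ → ℝ≥0∞ := fun i => mu (f^[i] ⁻¹' I₁) with ha
  set b : ℕ → ℝ≥0∞ := fun i => mu (f^[i] ⁻¹' I₂) with hb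
  have ha0 : 0 < a 0 := (hfin 0).1
  have hb0 : 0 < b 0 := (hfin 0).2.2.1
  have hε₁t : ε₁ ≠ ⊤ := by
    intro h
    have := hcomp₁ 0
    rw [h, ENNReal.top_mul hb0.ne'] at this
    exact ((hfin n₁).2.1.trans_le (by simpa using this)).false
  have hε₂t : ε₂ ≠ ⊤ := by
    intro h
    have := hcomp₂ 0
    rw [h, ENNReal.top_mul ha0.ne'] at this
    exact ((hfin n₂).2.2.2.trans_le (by simpa using this)).false
  obtain ⟨K₁, hK₁t, hK₁⟩ := sum_dom_aux a b ha0 hsup₁ ε₁ hε₁ hε₁t n₁ hcomp₁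
  obtain ⟨K₂, hK₂t, hK₂⟩ := sum_dom_aux b a hb0 hsup₂ ε₂ hε₂ hε₂t n₂ hcomp₂
  refine ⟨max 1 (max K₁ K₂), ?_, ?_⟩
  · exact max_lt ENNReal.one_lt_top (max_lt hK₁t hK₂t)
  intro n hn
  set K := max 1 (max K₁ K₂) with hKdef
  have hK0 : K ≠ 0 := by positivity
  have hKt : K ≠ ⊤ := (max_lt ENNReal.one_lt_top (max_lt hK₁t hK₂t)).ne
  set Sa := ∑ i ∈ Finset.range n, a i with hSa
  set Sb := ∑ i ∈ Finset.range n, b i with hSb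
  have hSa0 : Sa ≠ 0 := by
    have hle : a 0 ≤ Sa := Finset.single_le_sum (f := a)
      (fun i _ => zero_le) (Finset.mem_range.mpr hn)
    intro h; rw [h, le_zero_iff] at hle; exact ha0.ne' hle
  have hSb0 : Sb ≠ 0 := by
    have hle : b 0 ≤ Sb := Finset.single_le_sum (f := b)
      (fun i _ => zero_le) (Finset.mem_range.mpr hn)
    intro h; rw [h, le_zero_iff] at hle; exact hb0.ne' hle
  have hSat : Sa ≠ ⊤ :=
    (ENNReal.sum_lt_top.mpr fun i _ => ((le_iSup a i).trans_lt hsup₁)).ne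
  have hSbt : Sb ≠ ⊤ :=
    (ENNReal.sum_lt_top.mpr fun i _ => ((le_iSup b i).trans_lt hsup₂)).ne
  have hab : Sa ≤ K * Sb := (hK₂ n hn).trans (by gcongr; exact le_max_of_le_right (le_max_right _ _))
  have hba : Sb ≤ K * Sa := (hK₁ n hn).trans (by gcongr; exact le_max_of_le_right (le_max_left _ _))
  constructor
  · rw [ENNReal.le_div_iff_mul_le (Or.inl hSb0) (Or.inl hSbt), one_div]
    calc K⁻¹ * Sb ≤ K⁻¹ * (K * Sa) := by gcongr
      _ = Sa := by rw [← mul_assoc, ENNReal.inv_mul_cancel hK0 hKt, one_mul]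
  · rw [ENNReal.div_le_iff hSb0 hSbt]
    exact hab
end

section
/- Let $f : X \to X$ be measurable and $\mu$ a measure on $X$. Fix a measurable set $I_0$, and for $n \ge 1$ define $S_n\mu(A) = \sum_{i=0}^{n-1}\mu(f^{-i}(A))$ and $Q_n\mu(A) = S_n\mu(A)/S_n\mu(I_0)$ (assuming $0 < S_n\mu(I_0) < \infty$). Let $A$ be a measurable set with $\sup_{n \ge 0}\mu(f^{-n}(A)) < \infty$ and $\mu(A) < \infty$, and suppose $\sum_{n=0}^{\infty}\mu(f^{-n}(I_0)) = \infty$. If along some subsequence $n_k \to \infty$ both $Q_{n_k}\mu(A) \to \nu(A)$ and $Q_{n_k}\mu(f^{-1}(A)) \to \nu(f^{-1}(A))$ for some limit values, then $\nu(f^{-1}(A)) = \nu(A)$. -/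
open scoped ENNReal Topology
open MeasureTheory Set Function Filter

theorem stmt_7 {X : Type*} [MeasurableSpace X]
    (f : X → X) (hf : Measurable f)
    (mu : Measure X)
    (I₀ : Set X) (hI₀ : MeasurableSet I₀)
    (S : ℕ → Set X → ℝ≥0∞)
    (hS : ∀ n A, S n A = ∑ i ∈ Finset.range n, mu (f^[i] ⁻¹' A))
    (hSfin : ∀ n : ℕ, 1 ≤ n → 0 < S n I₀ ∧ S n I₀ < ⊤)
    (A : Set X) (hA : MeasurableSet A)
    (hsupA : (⨆ n : ℕ, mu (f^[n] ⁻¹' A)) < ⊤) (hmuA : mu A < ⊤)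
    (hdiv : ∑' n : ℕ, mu (f^[n] ⁻¹' I₀) = ⊤)
    (νA νfA : ℝ≥0∞)
    (nk : ℕ → ℕ) (hnk : StrictMono nk) (hnk1 : ∀ k, 1 ≤ nk k)
    (hlimA : Tendsto (fun k => S (nk k) A / S (nk k) I₀) atTop (𝓝 νA))
    (hlimfA : Tendsto (fun k => S (nk k) (f ⁻¹' A) / S (nk k) I₀) atTop (𝓝 νfA)) :
    νfA = νA := by
  -- The denominator tends to ⊤
  have hD : Tendsto (fun k => S (nk k) I₀) atTop (𝓝 ⊤) := by
    have h1 : Tendsto (fun n => S n I₀) atTop (𝓝 ⊤) := by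
      have := ENNReal.tendsto_nat_tsum (fun n => mu (f^[n] ⁻¹' I₀))
      rw [hdiv] at this
      simpa [hS] using this
    exact h1.comp hnk.tendsto_atTop
  -- constants divided by the denominator tend to 0
  have hzero : ∀ c : ℝ≥0∞, c ≠ ⊤ →
      Tendsto (fun k => c / S (nk k) I₀) atTop (𝓝 0) := by
    intro c hc
    have := ENNReal.Tendsto.const_div (a := c) hD (Or.inr hc)
    simpa using this
  -- the boundary terms tend to 0
  have hbound : Tendsto (fun k => mu (f^[nk k] ⁻¹' A) / S (nk k) I₀) atTop (𝓝 0) := by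
    refine tendsto_of_tendsto_of_tendsto_of_le_of_le tendsto_const_nhds
      (hzero _ hsupA.ne) (fun k => zero_le) (fun k => ?_)
    exact ENNReal.div_le_div_right (le_iSup (fun n => mu (f^[n] ⁻¹' A)) (nk k)) _
  -- the key telescoping identity
  have hsum : ∀ n, S n (f ⁻¹' A) + mu A = S n A + mu (f^[n] ⁻¹' A) := by
    intro n
    have hpre : ∀ i, f^[i] ⁻¹' (f ⁻¹' A) = f^[i + 1] ⁻¹' A := by
      intro i
      rw [Function.iterate_succ', Set.preimage_comp]
    calc S n (f ⁻¹' A) + mu A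
        = ∑ i ∈ Finset.range n, mu (f^[i + 1] ⁻¹' A) + mu (f^[0] ⁻¹' A) := by
          simp [hS, hpre]
      _ = ∑ i ∈ Finset.range (n + 1), mu (f^[i] ⁻¹' A) := (Finset.sum_range_succ' (fun i => mu (f^[i] ⁻¹' A)) n).symm
      _ = ∑ i ∈ Finset.range n, mu (f^[i] ⁻¹' A) + mu (f^[n] ⁻¹' A) := Finset.sum_range_succ _ n
      _ = S n A + mu (f^[n] ⁻¹' A) := by rw [hS]
  -- compare limits
  have hkey : ∀ k, S (nk k) (f ⁻¹' A) / S (nk k) I₀ + mu A / S (nk k) I₀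
      = S (nk k) A / S (nk k) I₀ + mu (f^[nk k] ⁻¹' A) / S (nk k) I₀ := by
    intro k
    rw [← ENNReal.add_div, ← ENNReal.add_div, hsum]
  have hL : Tendsto (fun k => S (nk k) (f ⁻¹' A) / S (nk k) I₀ + mu A / S (nk k) I₀)
      atTop (𝓝 (νfA + 0)) := hlimfA.add (hzero _ hmuA.ne)
  have hR : Tendsto (fun k => S (nk k) A / S (nk k) I₀ + mu (f^[nk k] ⁻¹' A) / S (nk k) I₀)
      atTop (𝓝 (νA + 0)) := hlimA.add hbound
  have := tendsto_nhds_unique (hL.congr hkey) hR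
  simpa using this
end

section
/- Let $\lambda$ be a probability measure on $X$, $f : X \to X$ measurable with $f_*\lambda \ll \lambda$, and $\mu \ll \lambda$. Let $I$ be measurable with $0 < \lambda(I) < \infty$, and suppose there is $K > 0$ such that for all $n \ge 0$, $0 < \mu(f^{-n}(I)) < \infty$ and the distortion of $f^n_*\mu$ on $I$ relative to $\lambda$ is bounded by $K$. If $A \subseteq I$ is measurable with $\lambda(A) = 0$, then $\mu(f^{-n}(A)) = 0$ for all $n \ge 0$; consequently any limit measure $\nu$ of the normalized sums $Q_n\mu$ satisfies $\nu(A) = 0$, i.e., the limit measures are absolutely continuous with respect to $\lambda$ on $I$. -/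
open scoped ENNReal Topology
open MeasureTheory Set Function Filter

theorem stmt_13 {X : Type*} [MeasurableSpace X]
    (lam : Measure X) [IsProbabilityMeasure lam]
    (f : X → X) (hf : Measurable f)
    (hquasi : lam.map f ≪ lam)
    (mu : Measure X) (hmu : mu ≪ lam)
    (I : Set X) (hI : MeasurableSet I)
    (hlI : 0 < lam I) (hlI' : lam I < ⊤)
    (K : ℝ≥0∞) (hK : 0 < K)
    (hfin : ∀ n : ℕ, 0 < mu (f^[n] ⁻¹' I) ∧ mu (f^[n] ⁻¹' I) < ⊤)
    (hdist : ∀ n : ℕ, ∀ A : Set X, MeasurableSet A → A ⊆ I →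
      (1 / K) * (lam A / lam I) ≤ mu (f^[n] ⁻¹' A) / mu (f^[n] ⁻¹' I) ∧
      mu (f^[n] ⁻¹' A) / mu (f^[n] ⁻¹' I) ≤ K * (lam A / lam I))
    (A : Set X) (hA : MeasurableSet A) (hAI : A ⊆ I) (hA0 : lam A = 0) :
    (∀ n : ℕ, mu (f^[n] ⁻¹' A) = 0) ∧
    ∀ (I₀ : Set X) (νA : ℝ≥0∞) (nk : ℕ → ℕ), StrictMono nk →
      Tendsto (fun k =>
          (∑ i ∈ Finset.range (nk k), mu (f^[i] ⁻¹' A)) /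
            (∑ i ∈ Finset.range (nk k), mu (f^[i] ⁻¹' I₀))) atTop (𝓝 νA) →
      νA = 0 := by
  have hzero : ∀ n : ℕ, mu (f^[n] ⁻¹' A) = 0 := by
    intro n
    have h := (hdist n A hA hAI).2
    rw [hA0] at h
    simp only [ENNReal.zero_div, mul_zero, le_zero_iff] at h
    rcases ENNReal.div_eq_zero_iff.mp h with h0 | htop
    · exact h0
    · exact absurd htop (hfin n).2.ne
  refine ⟨hzero, fun I₀ νA nk hnk htend => ?_⟩
  have : (fun k =>
      (∑ i ∈ Finset.range (nk k), mu (f^[i] ⁻¹' A)) /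
        (∑ i ∈ Finset.range (nk k), mu (f^[i] ⁻¹' I₀))) = fun _ => (0 : ℝ≥0∞) := by
    funext k
    simp [hzero, ENNReal.zero_div]
  rw [this] at htend
  exact (tendsto_nhds_unique htend tendsto_const_nhds)
end

section
/- Let $\lambda$ be a probability measure on $X$, $f$ measurable with $f_*\lambda \ll \lambda$, $\mu \ll \lambda$, and $I$ a measurable set with $0 < \lambda(I) < \infty$. Suppose for some $K > 0$ all pushforwards $f^n_*\mu$ have distortion on $I$ bounded by $K$ (and $0 < \mu(f^{-n}(I)) < \infty$). Then for every measurable $A \subseteq I$ with $\lambda(A) > 0$ and every $n \ge 0$, $\mu(f^{-n}(A)) \ge \frac{1}{K}\frac{\lambda(A)}{\lambda(I)}\mu(f^{-n}(I)) > 0$; hence any limit measure $\nu$ of $Q_n\mu$ with $\nu(I) > 0$ satisfies $\nu(A) > 0$, i.e., $\nu$ is equivalent to $\lambda$ on $I$. -/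
open scoped ENNReal Topology
open MeasureTheory Set Function Filter

theorem stmt_14 {X : Type*} [MeasurableSpace X]
    (lam : Measure X) [IsProbabilityMeasure lam]
    (f : X → X) (hf : Measurable f)
    (hquasi : lam.map f ≪ lam)
    (mu : Measure X) (hmu : mu ≪ lam)
    (I : Set X) (hI : MeasurableSet I)
    (hlI : 0 < lam I) (hlI' : lam I < ⊤)
    (K : ℝ≥0∞) (hK : 0 < K) (hK' : K < ⊤)
    (hfin : ∀ n : ℕ, 0 < mu (f^[n] ⁻¹' I) ∧ mu (f^[n] ⁻¹' I) < ⊤)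
    (hdist : ∀ n : ℕ, ∀ A : Set X, MeasurableSet A → A ⊆ I →
      (1 / K) * (lam A / lam I) ≤ mu (f^[n] ⁻¹' A) / mu (f^[n] ⁻¹' I) ∧
      mu (f^[n] ⁻¹' A) / mu (f^[n] ⁻¹' I) ≤ K * (lam A / lam I))
    (A : Set X) (hA : MeasurableSet A) (hAI : A ⊆ I) (hA0 : 0 < lam A) :
    (∀ n : ℕ,
      (1 / K) * (lam A / lam I) * mu (f^[n] ⁻¹' I) ≤ mu (f^[n] ⁻¹' A) ∧
      0 < mu (f^[n] ⁻¹' A)) ∧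
    ∀ (I₀ : Set X) (νA νI : ℝ≥0∞) (nk : ℕ → ℕ), StrictMono nk →
      Tendsto (fun k =>
          (∑ i ∈ Finset.range (nk k), mu (f^[i] ⁻¹' A)) /
            (∑ i ∈ Finset.range (nk k), mu (f^[i] ⁻¹' I₀))) atTop (𝓝 νA) →
      Tendsto (fun k =>
          (∑ i ∈ Finset.range (nk k), mu (f^[i] ⁻¹' I)) /
            (∑ i ∈ Finset.range (nk k), mu (f^[i] ⁻¹' I₀))) atTop (𝓝 νI) →
      0 < νI → 0 < νA := by
  set c : ℝ≥0∞ := (1 / K) * (lam A / lam I) with hc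
  have hc0 : c ≠ 0 := by
    apply mul_ne_zero
    · simp [ENNReal.div_eq_zero_iff, hK'.ne]
    · simp [ENNReal.div_eq_zero_iff, hA0.ne', hlI'.ne]
  have hcT : c ≠ ⊤ := by
    apply ENNReal.mul_ne_top
    · simp [ENNReal.div_eq_top, hK.ne']
    · have : lam A ≠ ⊤ := ((measure_mono hAI).trans_lt hlI').ne
      simp [ENNReal.div_eq_top, hlI.ne', this]
  have key : ∀ n : ℕ, c * mu (f^[n] ⁻¹' I) ≤ mu (f^[n] ⁻¹' A) ∧
      0 < mu (f^[n] ⁻¹' A) := by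
    intro n
    obtain ⟨hpos, hlt⟩ := hfin n
    have h1 := (hdist n A hA hAI).1
    have h2 : c * mu (f^[n] ⁻¹' I) ≤ mu (f^[n] ⁻¹' A) := by
      rw [ENNReal.le_div_iff_mul_le (Or.inl hpos.ne') (Or.inl hlt.ne)] at h1
      exact h1
    refine ⟨h2, lt_of_lt_of_le ?_ h2⟩
    exact ENNReal.mul_pos hc0 hpos.ne' |>.trans_le le_rfl
  refine ⟨key, ?_⟩
  intro I₀ νA νI nk hnk hA' hI' hνI
  have hle : c * νI ≤ νA := by
    have htend : Tendsto (fun k =>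
        c * ((∑ i ∈ Finset.range (nk k), mu (f^[i] ⁻¹' I)) /
          (∑ i ∈ Finset.range (nk k), mu (f^[i] ⁻¹' I₀)))) atTop (𝓝 (c * νI)) :=
      ENNReal.Tendsto.const_mul hI' (Or.inr hcT)
    refine le_of_tendsto_of_tendsto htend hA' (Eventually.of_forall fun k => ?_)
    simp only []
    rw [← mul_div_assoc]
    apply ENNReal.div_le_div_right
    calc c * ∑ i ∈ Finset.range (nk k), mu (f^[i] ⁻¹' I)
        = ∑ i ∈ Finset.range (nk k), c * mu (f^[i] ⁻¹' I) := Finset.mul_sum ..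
      _ ≤ ∑ i ∈ Finset.range (nk k), mu (f^[i] ⁻¹' A) :=
          Finset.sum_le_sum fun i _ => (key i).1
  exact lt_of_lt_of_le (ENNReal.mul_pos hc0 hνI.ne') hle
end

section
/- Let $X$ be a compact metric space, $I \subseteq X$ a Borel set with $0 < \lambda(I) < \infty$ for a Borel probability measure $\lambda$, and $K > 0$. The set of Borel measures $\mu$ on $I$ satisfying $1/K \le \mu(I) \le K$ and the distortion bound $(1/K)\lambda(A)/\lambda(I) \le \mu(A)/\mu(I) \le K\lambda(A)/\lambda(I)$ for all Borel $A \subseteq I$, is sequentially compact in the topology of weak convergence of measures on $X$: every sequence in this set has a subsequence converging weakly to a measure $\mu$ with $\mu(X\setminus \bar I)=0$, $1/K \le \mu(X) \le K$, and satisfying $(1/K)\lambda(A)/\lambda(I) \le \mu(A)/\mu(X) \le K\lambda(A)/\lambda(I)$ for Borel sets $A\subseteq I$ whose boundary is a $\mu$-null and $\lambda$-null set. -/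
open scoped ENNReal Topology
open MeasureTheory Set Filter

set_option maxHeartbeats 1600000 in
theorem stmt_15 {X : Type*} [MetricSpace X] [CompactSpace X]
    [MeasurableSpace X] [BorelSpace X]
    (lam : Measure X) [IsProbabilityMeasure lam]
    (I : Set X) (hI : MeasurableSet I)
    (hlI : 0 < lam I) (hlI' : lam I < ⊤)
    (K : ℝ≥0∞) (hK : 0 < K) (hK' : K < ⊤)
    (mus : ℕ → Measure X) (hfin : ∀ k, IsFiniteMeasure (mus k))
    (hsupp : ∀ k, mus k (univ \ I) = 0)
    (hmass : ∀ k, 1 / K ≤ mus k I ∧ mus k I ≤ K)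
    (hdist : ∀ k, ∀ A : Set X, MeasurableSet A → A ⊆ I →
      (1 / K) * (lam A / lam I) ≤ mus k A / mus k I ∧
      mus k A / mus k I ≤ K * (lam A / lam I)) :
    ∃ (mu : Measure X) (_ : IsFiniteMeasure mu) (φ : ℕ → ℕ), StrictMono φ ∧
      (∀ g : C(X, ℝ), Tendsto (fun k => ∫ x, g x ∂(mus (φ k))) atTop
        (𝓝 (∫ x, g x ∂mu))) ∧
      mu (univ \ closure I) = 0 ∧
      (1 / K ≤ mu univ ∧ mu univ ≤ K) ∧
      (∀ A : Set X, MeasurableSet A → A ⊆ I →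
        mu (frontier A) = 0 → lam (frontier A) = 0 →
        (1 / K) * (lam A / lam I) ≤ mu A / mu univ ∧
        mu A / mu univ ≤ K * (lam A / lam I)) := by
  classical
  have hKne0 : K ≠ 0 := hK.ne'
  have hKnetop : K ≠ ⊤ := hK'.ne
  have hIne0 : lam I ≠ 0 := hlI.ne'
  have hKinv_ne0 : 1 / K ≠ 0 := by
    rw [one_div]; exact ENNReal.inv_ne_zero.mpr hKnetop
  have hKinv_netop : 1 / K ≠ ⊤ := by
    rw [one_div]; exact ENNReal.inv_ne_top.mpr hKne0
  have musI_ne0 : ∀ k, mus k I ≠ 0 := by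
    intro k h
    have := (hmass k).1
    rw [h] at this
    exact hKinv_ne0 (le_antisymm this bot_le)
  have musI_netop : ∀ k, mus k I ≠ ⊤ := fun k =>
    ((hmass k).2.trans_lt hK').ne
  have hIuniv : ∀ k, mus k univ = mus k I := by
    intro k
    have h := measure_inter_add_diff (μ := mus k) univ hI
    rw [univ_inter, hsupp k, add_zero] at h
    exact h.symm
  set c : ℝ≥0∞ := K * K / lam I with hc
  have hc_top : c ≠ ⊤ :=
    (ENNReal.div_lt_top (ENNReal.mul_ne_top hKnetop hKnetop) hIne0).ne
  -- domination of all measures by c • lam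
  have hdom : ∀ k, mus k ≤ c • lam := by
    intro k
    rw [Measure.le_iff]
    intro A hA
    have h1 : mus k (A \ I) = 0 :=
      measure_mono_null (diff_subset_diff_left (subset_univ A)) (hsupp k)
    have h2 : mus k A = mus k (A ∩ I) := by
      rw [← measure_inter_add_diff A hI, h1, add_zero]
    have h3 := (hdist k (A ∩ I) (hA.inter hI) inter_subset_right).2
    have h4 : mus k (A ∩ I) ≤ K * (lam (A ∩ I) / lam I) * mus k I :=
      (ENNReal.div_le_iff (musI_ne0 k) (musI_netop k)).mp h3
    have h5 : K * (lam (A ∩ I) / lam I) * mus k I ≤ K * (lam A / lam I) * K :=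
      mul_le_mul' (mul_le_mul' (le_refl K)
        (ENNReal.div_le_div_right (measure_mono inter_subset_left) _)) (hmass k).2
    have h6 : K * (lam A / lam I) * K = c * lam A := by
      rw [hc, div_eq_mul_inv, div_eq_mul_inv]; ring
    calc mus k A = mus k (A ∩ I) := h2
      _ ≤ K * (lam (A ∩ I) / lam I) * mus k I := h4
      _ ≤ K * (lam A / lam I) * K := h5
      _ = c * lam A := h6
      _ = (c • lam) A := by rw [Measure.smul_apply, smul_eq_mul]
  have hac : ∀ k, mus k ≪ lam := by
    intro k
    refine Measure.AbsolutelyContinuous.mk (fun A hA h0 => ?_)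
    have := Measure.le_iff.mp (hdom k) A hA
    simpa [h0] using this
  haveI f1 : Fact ((1:ℝ≥0∞) ≤ 2) := ⟨one_le_two⟩
  haveI f2 : Fact ((2:ℝ≥0∞) ≠ ∞) := ⟨by norm_num⟩
  haveI : TopologicalSpace.SeparableSpace (Lp ℝ 2 lam) := by infer_instance
  -- integrability transfers
  have hint : ∀ (u : X → ℝ), Integrable u lam → ∀ k, Integrable u (mus k) :=
    fun u hu k => (hu.smul_measure hc_top).mono_measure (hdom k)
  have hintH : ∀ (g : Lp ℝ 2 lam), Integrable (⇑g) lam :=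
    fun g => (Lp.memLp g).integrable one_le_two
  have hL1L2 : ∀ (g : Lp ℝ 2 lam), ∫ x, |g x| ∂lam ≤ ‖g‖ := by
    intro g
    have hm := Lp.aestronglyMeasurable g
    have h1 : ∫ x, ‖g x‖ ∂lam = (eLpNorm (⇑g) 1 lam).toReal :=
      by rw [integral_norm_eq_lintegral_enorm hm, eLpNorm_one_eq_lintegral_enorm]
    have h2 : eLpNorm (⇑g) 1 lam ≤ eLpNorm (⇑g) 2 lam :=
      eLpNorm_le_eLpNorm_of_exponent_le (by norm_num) hm
    calc ∫ x, |g x| ∂lam = (eLpNorm (⇑g) 1 lam).toReal := by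
          simpa [Real.norm_eq_abs] using h1
      _ ≤ (eLpNorm (⇑g) 2 lam).toReal :=
          ENNReal.toReal_mono (Lp.eLpNorm_ne_top g) h2
      _ = ‖g‖ := (Lp.norm_def g).symm
  have hM0 : (0:ℝ) ≤ c.toReal := ENNReal.toReal_nonneg
  have hTb : ∀ k (u : X → ℝ), Integrable u lam →
      |∫ x, u x ∂(mus k)| ≤ c.toReal * ∫ x, |u x| ∂lam := by
    intro k u hu
    haveI := hfin k
    have h1 : |∫ x, u x ∂(mus k)| ≤ ∫ x, |u x| ∂(mus k) := by
      simpa [Real.norm_eq_abs] using norm_integral_le_integral_norm (μ := mus k) u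
    have h2 : ∫ x, |u x| ∂(mus k) ≤ ∫ x, |u x| ∂(c • lam) :=
      integral_mono_measure (hdom k) (Eventually.of_forall fun x => abs_nonneg _)
        ((hu.abs).smul_measure hc_top)
    have h3 : ∫ x, |u x| ∂(c • lam) = c.toReal * ∫ x, |u x| ∂lam := by
      rw [integral_smul_measure, smul_eq_mul]
    linarith
  set T : ℕ → Lp ℝ 2 lam → ℝ := fun k g => ∫ x, g x ∂(mus k) with hT
  have hTsub : ∀ k (g h : Lp ℝ 2 lam),
      T k g - T k h = ∫ x, (g - h : Lp ℝ 2 lam) x ∂(mus k) := by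
    intro k g h
    haveI := hfin k
    have he : ⇑(g - h) =ᵐ[mus k] ⇑g - ⇑h :=
      (Lp.coeFn_sub g h).filter_mono (hac k).ae_le
    simp only [hT]
    rw [integral_congr_ae he]
    simp only [Pi.sub_apply]
    rw [integral_sub (hint _ (hintH g) k) (hint _ (hintH h) k)]
  have hTlip : ∀ k (g h : Lp ℝ 2 lam), |T k g - T k h| ≤ c.toReal * ‖g - h‖ := by
    intro k g h
    rw [hTsub]
    calc |∫ x, (g - h : Lp ℝ 2 lam) x ∂(mus k)|
        ≤ c.toReal * ∫ x, |(g - h : Lp ℝ 2 lam) x| ∂lam := hTb k _ (hintH _)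
      _ ≤ c.toReal * ‖g - h‖ := mul_le_mul_of_nonneg_left (hL1L2 _) hM0
  have hT0 : ∀ k, T k 0 = 0 := by
    intro k
    haveI := hfin k
    have he : ⇑(0 : Lp ℝ 2 lam) =ᵐ[mus k] (0 : X → ℝ) :=
      (Lp.coeFn_zero ℝ 2 lam).filter_mono (hac k).ae_le
    simp only [hT]
    rw [integral_congr_ae he]
    simp
  have hTbound : ∀ k g, |T k g| ≤ c.toReal * ‖g‖ := by
    intro k g
    have := hTlip k g 0
    simpa [hT0 k] using this
  -- countable dense family
  obtain ⟨D, hDc, hDd⟩ := TopologicalSpace.exists_countable_dense (Lp ℝ 2 lam)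
  obtain ⟨d, hd⟩ := hDc.exists_eq_range hDd.nonempty
  -- compactness of the product of intervals: extract a subsequence
  have hFmem : ∀ k, (fun n => T k (d n)) ∈
      univ.pi (fun n => Icc (-(c.toReal * ‖d n‖)) (c.toReal * ‖d n‖)) := by
    intro k n _
    exact abs_le.mp (hTbound k (d n))
  have hcomp : IsCompact (univ.pi fun n : ℕ =>
      Icc (-(c.toReal * ‖d n‖)) (c.toReal * ‖d n‖)) :=
    isCompact_univ_pi fun n => isCompact_Icc
  obtain ⟨y, -, φ, hφ, hconv⟩ := hcomp.isSeqCompact hFmem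
  have hconv' : ∀ n, Tendsto (fun k => T (φ k) (d n)) atTop (𝓝 (y n)) := by
    intro n
    exact tendsto_pi_nhds.mp hconv n
  -- convergence for every g in L²
  have key : ∀ g, ∃ L, Tendsto (fun k => T (φ k) g) atTop (𝓝 L) := by
    intro g
    apply cauchySeq_tendsto_of_complete
    rw [Metric.cauchySeq_iff]
    intro ε hε
    have hδ : (0:ℝ) < ε / (4 * (c.toReal + 1)) := by positivity
    obtain ⟨u, hu_mem, hud⟩ := Metric.mem_closure_iff.mp (hDd g) _ hδ
    rw [hd] at hu_mem
    obtain ⟨n, rfl⟩ := hu_mem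
    have hC : CauchySeq (fun k => T (φ k) (d n)) := (hconv' n).cauchySeq
    obtain ⟨N, hN⟩ := Metric.cauchySeq_iff.mp hC (ε/2) (by positivity)
    refine ⟨N, fun j hj i hi => ?_⟩
    have e1 : |T (φ j) g - T (φ j) (d n)| ≤ c.toReal * ‖g - d n‖ := hTlip _ _ _
    have e2 : |T (φ i) g - T (φ i) (d n)| ≤ c.toReal * ‖g - d n‖ := hTlip _ _ _
    have e3 : |T (φ j) (d n) - T (φ i) (d n)| < ε/2 := by
      have := hN j hj i hi
      rwa [Real.dist_eq] at this
    have hnorm : ‖g - d n‖ < ε / (4 * (c.toReal + 1)) := by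
      rwa [dist_eq_norm] at hud
    have e4 : c.toReal * ‖g - d n‖ ≤ ε/4 := by
      have h1 : c.toReal * ‖g - d n‖ ≤ (c.toReal + 1) * (ε / (4 * (c.toReal + 1))) := by
        apply mul_le_mul (by linarith) hnorm.le (norm_nonneg _) (by linarith)
      have h2 : (c.toReal + 1) * (ε / (4 * (c.toReal + 1))) = ε/4 := by
        field_simp
      linarith
    rw [Real.dist_eq]
    have tr : |T (φ j) g - T (φ i) g| ≤
        |T (φ j) g - T (φ j) (d n)| + |T (φ j) (d n) - T (φ i) (d n)| +
        |T (φ i) g - T (φ i) (d n)| := by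
      have := abs_sub_abs_le_abs_sub (T (φ j) g) (T (φ i) g)
      calc |T (φ j) g - T (φ i) g|
          = |(T (φ j) g - T (φ j) (d n)) + (T (φ j) (d n) - T (φ i) (d n)) +
            (T (φ i) (d n) - T (φ i) g)| := by ring_nf
        _ ≤ |T (φ j) g - T (φ j) (d n)| + |T (φ j) (d n) - T (φ i) (d n)| +
            |T (φ i) (d n) - T (φ i) g| := by
              refine (abs_add_le _ _).trans ?_
              gcongr
              exact abs_add_le _ _
        _ = |T (φ j) g - T (φ j) (d n)| + |T (φ j) (d n) - T (φ i) (d n)| +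
            |T (φ i) g - T (φ i) (d n)| := by rw [abs_sub_comm (T (φ i) (d n))]
    linarith
  choose Lf hLf using key
  -- linearity and boundedness of the limit functional
  have hLadd : ∀ g h, Lf (g + h) = Lf g + Lf h := by
    intro g h
    have h1 : ∀ k, T k (g + h) = T k g + T k h := by
      intro k
      haveI := hfin k
      have he : ⇑(g + h) =ᵐ[mus k] ⇑g + ⇑h :=
        (Lp.coeFn_add g h).filter_mono (hac k).ae_le
      simp only [hT]
      rw [integral_congr_ae he]
      simp only [Pi.add_apply]
      rw [integral_add (hint _ (hintH g) k) (hint _ (hintH h) k)]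
    have t2 : Tendsto (fun k => T (φ k) (g + h)) atTop (𝓝 (Lf g + Lf h)) := by
      have := (hLf g).add (hLf h)
      simpa [h1] using this
    exact tendsto_nhds_unique (hLf (g + h)) t2
  have hLsmul : ∀ (r : ℝ) g, Lf (r • g) = r * Lf g := by
    intro r g
    have h1 : ∀ k, T k (r • g) = r * T k g := by
      intro k
      haveI := hfin k
      have he : ⇑(r • g) =ᵐ[mus k] r • ⇑g :=
        (Lp.coeFn_smul r g).filter_mono (hac k).ae_le
      simp only [hT]
      rw [integral_congr_ae he]
      simp only [Pi.smul_apply]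
      rw [integral_smul]
      simp
    have t2 : Tendsto (fun k => T (φ k) (r • g)) atTop (𝓝 (r * Lf g)) := by
      have := (hLf g).const_mul r
      simpa [h1] using this
    exact tendsto_nhds_unique (hLf (r • g)) t2
  have hLbound : ∀ g, |Lf g| ≤ c.toReal * ‖g‖ := fun g =>
    le_of_tendsto (hLf g).abs (Eventually.of_forall fun k => hTbound _ g)
  set L : Lp ℝ 2 lam →L[ℝ] ℝ :=
    LinearMap.mkContinuous
      { toFun := Lf
        map_add' := hLadd
        map_smul' := hLsmul }
      c.toReal (fun g => by simpa [Real.norm_eq_abs] using hLbound g) with hL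
  set f : Lp ℝ 2 lam := (InnerProductSpace.toDual ℝ (Lp ℝ 2 lam)).symm L with hfdef
  have hfL : ∀ g, (inner ℝ f g : ℝ) = Lf g := by
    intro g
    rw [hfdef]
    rw [InnerProductSpace.toDual_symm_apply]
    rfl
  have hinner : ∀ g : Lp ℝ 2 lam, (inner ℝ f g : ℝ) = ∫ x, f x * g x ∂lam := by
    intro g
    rw [L2.inner_def]
    congr 1
    funext x
    simp [mul_comm]
  have hmain : ∀ g : Lp ℝ 2 lam,
      Tendsto (fun k => T (φ k) g) atTop (𝓝 (∫ x, f x * g x ∂lam)) := by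
    intro g
    have := hLf g
    rwa [← hfL, hinner] at this
  -- indicator computations
  have hind : ∀ (A : Set X) (hA : MeasurableSet A),
      Tendsto (fun k => (mus (φ k) A).toReal) atTop (𝓝 (∫ x in A, f x ∂lam)) := by
    intro A hA
    set gA : Lp ℝ 2 lam := indicatorConstLp 2 hA (measure_ne_top lam A) (1:ℝ) with hgA
    have fact1 : ∀ k, T k gA = (mus k A).toReal := by
      intro k
      haveI := hfin k
      have he : ⇑gA =ᵐ[mus k] A.indicator (fun _ => (1:ℝ)) :=
        indicatorConstLp_coeFn.filter_mono (hac k).ae_le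
      simp only [hT]
      rw [integral_congr_ae he, integral_indicator hA, setIntegral_const]
      simp
      rfl
    have fact2 : ∫ x, f x * gA x ∂lam = ∫ x in A, f x ∂lam := by
      have he : ⇑gA =ᵐ[lam] A.indicator (fun _ => (1:ℝ)) := indicatorConstLp_coeFn
      have : (fun x => f x * gA x) =ᵐ[lam] A.indicator (⇑f) := by
        filter_upwards [he] with x hx
        rw [hx]
        by_cases hxA : x ∈ A <;> simp [hxA]
      rw [integral_congr_ae this, integral_indicator hA]
    have := hmain gA
    rw [fact2] at this
    simpa [fact1] using this
  -- nonnegativity of f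
  have hf_int : Integrable (⇑f) lam := hintH f
  have hf_nonneg : 0 ≤ᵐ[lam] ⇑f := by
    apply ae_nonneg_of_forall_setIntegral_nonneg hf_int
    intro s hs _
    refine ge_of_tendsto (hind s hs) (Eventually.of_forall fun k => ?_)
    exact ENNReal.toReal_nonneg
  set G : X → ℝ := fun x => max (f x) 0 with hG
  have hGmeas : Measurable G :=
    ((Lp.stronglyMeasurable f).measurable).max measurable_const
  have hGnn : ∀ x, 0 ≤ G x := fun x => le_max_right _ _
  have hGae : ⇑f =ᵐ[lam] G := by
    filter_upwards [hf_nonneg] with x hx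
    exact (max_eq_left hx).symm
  have hGint : Integrable G lam := hf_int.congr hGae
  set mu := lam.withDensity (fun x => ENNReal.ofReal (G x)) with hmu
  have hmuA : ∀ A : Set X, MeasurableSet A →
      mu A = ENNReal.ofReal (∫ x in A, G x ∂lam) := by
    intro A hA
    rw [hmu, withDensity_apply _ hA,
      ← ofReal_integral_eq_lintegral_ofReal (hGint.integrableOn)
        (Eventually.of_forall fun x => hGnn x)]
  have hmuconv : ∀ A : Set X, MeasurableSet A →
      Tendsto (fun k => (mus (φ k) A).toReal) atTop (𝓝 (∫ x in A, G x ∂lam)) := by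
    intro A hA
    have heq : ∫ x in A, f x ∂lam = ∫ x in A, G x ∂lam :=
      integral_congr_ae (ae_restrict_of_ae hGae)
    rw [← heq]
    exact hind A hA
  haveI hmufin : IsFiniteMeasure mu := by
    constructor
    rw [hmuA univ MeasurableSet.univ]
    exact ENNReal.ofReal_lt_top
  -- the bounds on the total mass
  have hterm_lo : ∀ k, (1/K).toReal ≤ (mus (φ k) univ).toReal := by
    intro k
    rw [hIuniv]
    exact ENNReal.toReal_mono (musI_netop _) (hmass (φ k)).1
  have hterm_hi : ∀ k, (mus (φ k) univ).toReal ≤ K.toReal := by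
    intro k
    rw [hIuniv]
    exact ENNReal.toReal_mono hKnetop (hmass (φ k)).2
  set rU : ℝ := ∫ x, G x ∂lam with hrU
  have hUconv : Tendsto (fun k => (mus (φ k) univ).toReal) atTop (𝓝 rU) := by
    have := hmuconv univ MeasurableSet.univ
    simpa [hrU, Measure.restrict_univ] using this
  have hrU_lo : (1/K).toReal ≤ rU :=
    ge_of_tendsto hUconv (Eventually.of_forall hterm_lo)
  have hrU_hi : rU ≤ K.toReal :=
    le_of_tendsto hUconv (Eventually.of_forall hterm_hi)
  have hrU_pos : 0 < rU :=
    lt_of_lt_of_le (ENNReal.toReal_pos hKinv_ne0 hKinv_netop) hrU_lo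
  have hmuuniv : mu univ = ENNReal.ofReal rU := by
    rw [hmuA univ MeasurableSet.univ]
    simp [hrU]
  have hmuuniv_ne0 : mu univ ≠ 0 := by
    rw [hmuuniv]
    exact (ENNReal.ofReal_pos.mpr hrU_pos).ne'
  have hmuuniv_netop : mu univ ≠ ⊤ := by
    rw [hmuuniv]; exact ENNReal.ofReal_ne_top
  refine ⟨mu, hmufin, φ, hφ, ?_, ?_, ?_, ?_⟩
  · -- convergence of integrals of continuous functions
    intro g
    have hb : ∀ x, ‖g x‖ ≤ ‖BoundedContinuousFunction.mkOfCompact g‖ := by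
      intro x
      simpa using (BoundedContinuousFunction.mkOfCompact g).norm_coe_le_norm x
    have hg2 : MemLp (⇑g) 2 lam :=
      (memLp_top_of_bound g.continuous.aestronglyMeasurable _
        (Eventually.of_forall hb)).mono_exponent le_top
    set gL : Lp ℝ 2 lam := hg2.toLp ⇑g with hgL
    have hcoe : ⇑gL =ᵐ[lam] ⇑g := hg2.coeFn_toLp
    have h1 : ∀ k, T k gL = ∫ x, g x ∂(mus k) := by
      intro k
      haveI := hfin k
      exact integral_congr_ae (hcoe.filter_mono (hac k).ae_le)
    have h2 : ∫ x, g x ∂mu = ∫ x, f x * gL x ∂lam := by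
      have hm : Measurable fun x => (G x).toNNReal := hGmeas.real_toNNReal
      have step1 : ∫ x, g x ∂mu = ∫ x, (G x).toNNReal • g x ∂lam := by
        rw [hmu]
        exact integral_withDensity_eq_integral_smul hm ⇑g
      have step2 : ∫ x, (G x).toNNReal • g x ∂lam = ∫ x, G x * g x ∂lam := by
        congr 1
        funext x
        simp only [NNReal.smul_def, smul_eq_mul, Real.coe_toNNReal _ (hGnn x)]
      have step3 : ∫ x, G x * g x ∂lam = ∫ x, f x * gL x ∂lam := by
        apply integral_congr_ae
        filter_upwards [hGae, hcoe] with x h1 h2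
        rw [h1, h2]
      rw [step1, step2, step3]
    rw [h2]
    have := hmain gL
    have heq : (fun k => T (φ k) gL) = fun k => ∫ x, g x ∂(mus (φ k)) := by
      funext k
      exact h1 (φ k)
    rwa [heq] at this
  · -- vanishing outside closure I
    have hA : MeasurableSet (univ \ closure I) :=
      MeasurableSet.univ.diff isClosed_closure.measurableSet
    have hzero : ∀ k, mus (φ k) (univ \ closure I) = 0 := fun k =>
      measure_mono_null (diff_subset_diff_right subset_closure) (hsupp (φ k))
    have hconv0 := hmuconv _ hA
    have : (∫ x in univ \ closure I, G x ∂lam) = 0 :=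
      tendsto_nhds_unique hconv0 (by simpa [hzero] using (tendsto_const_nhds :
        Tendsto (fun _ : ℕ => (0:ℝ)) atTop (𝓝 0)))
    rw [hmuA _ hA, this]
    simp
  · -- mass bounds
    constructor
    · rw [hmuuniv]
      calc 1/K = ENNReal.ofReal ((1/K).toReal) :=
            (ENNReal.ofReal_toReal hKinv_netop).symm
        _ ≤ ENNReal.ofReal rU := ENNReal.ofReal_le_ofReal hrU_lo
    · rw [hmuuniv]
      calc ENNReal.ofReal rU ≤ ENNReal.ofReal K.toReal :=
            ENNReal.ofReal_le_ofReal hrU_hi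
        _ = K := ENNReal.ofReal_toReal hKnetop
  · -- distortion bounds
    intro A hA hAI _ _
    set t : ℝ≥0∞ := K * (lam A / lam I) with ht
    set s : ℝ≥0∞ := (1/K) * (lam A / lam I) with hs
    have hdiv_netop : lam A / lam I ≠ ⊤ :=
      (ENNReal.div_lt_top (measure_ne_top lam A) hIne0).ne
    have ht_top : t ≠ ⊤ := ENNReal.mul_ne_top hKnetop hdiv_netop
    have hs_top : s ≠ ⊤ := ENNReal.mul_ne_top hKinv_netop hdiv_netop
    set rA : ℝ := ∫ x in A, G x ∂lam with hrA
    have hAconv : Tendsto (fun k => (mus (φ k) A).toReal) atTop (𝓝 rA) :=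
      hmuconv A hA
    -- upper bound terms
    have hup : ∀ k, (mus (φ k) A).toReal ≤ t.toReal * (mus (φ k) univ).toReal := by
      intro k
      haveI := hfin (φ k)
      have h4 : mus (φ k) A ≤ t * mus (φ k) I :=
        (ENNReal.div_le_iff (musI_ne0 _) (musI_netop _)).mp (hdist (φ k) A hA hAI).2
      have h5 : (mus (φ k) A).toReal ≤ (t * mus (φ k) I).toReal :=
        ENNReal.toReal_mono (ENNReal.mul_ne_top ht_top (musI_netop _)) h4
      rw [ENNReal.toReal_mul] at h5
      rwa [hIuniv]
    have hlo : ∀ k, s.toReal * (mus (φ k) univ).toReal ≤ (mus (φ k) A).toReal := by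
      intro k
      haveI := hfin (φ k)
      have h4 : s ≤ mus (φ k) A / mus (φ k) I := (hdist (φ k) A hA hAI).1
      have h5 : s * mus (φ k) I ≤ mus (φ k) A := by
        calc s * mus (φ k) I ≤ (mus (φ k) A / mus (φ k) I) * mus (φ k) I :=
              mul_le_mul_left h4 _
          _ = mus (φ k) A := ENNReal.div_mul_cancel (musI_ne0 _) (musI_netop _)
      have h6 : (s * mus (φ k) I).toReal ≤ (mus (φ k) A).toReal :=
        ENNReal.toReal_mono (measure_ne_top _ _) h5
      rw [ENNReal.toReal_mul] at h6
      rwa [hIuniv]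
    have hlimup : rA ≤ t.toReal * rU :=
      le_of_tendsto_of_tendsto' hAconv (hUconv.const_mul t.toReal) hup
    have hlimlo : s.toReal * rU ≤ rA :=
      le_of_tendsto_of_tendsto' (hUconv.const_mul s.toReal) hAconv hlo
    have hmuA' : mu A = ENNReal.ofReal rA := hmuA A hA
    constructor
    · -- lower bound
      rw [ENNReal.le_div_iff_mul_le (Or.inl hmuuniv_ne0) (Or.inl hmuuniv_netop)]
      rw [hmuA', hmuuniv]
      calc s * ENNReal.ofReal rU
          = ENNReal.ofReal s.toReal * ENNReal.ofReal rU := by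
            rw [ENNReal.ofReal_toReal hs_top]
        _ = ENNReal.ofReal (s.toReal * rU) :=
            (ENNReal.ofReal_mul ENNReal.toReal_nonneg).symm
        _ ≤ ENNReal.ofReal rA := ENNReal.ofReal_le_ofReal hlimlo
    · -- upper bound
      rw [ENNReal.div_le_iff hmuuniv_ne0 hmuuniv_netop]
      rw [hmuA', hmuuniv]
      calc ENNReal.ofReal rA ≤ ENNReal.ofReal (t.toReal * rU) :=
            ENNReal.ofReal_le_ofReal hlimup
        _ = ENNReal.ofReal t.toReal * ENNReal.ofReal rU :=
            ENNReal.ofReal_mul ENNReal.toReal_nonneg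
        _ = t * ENNReal.ofReal rU := by rw [ENNReal.ofReal_toReal ht_top]
end
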